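/- Let a > 0 and b > 0 with 4b - 3a > 0 and 3a² - 4ab + 4 ≥ 0, and set R1 = √(3a² - 4ab + 4), R2 = 4ab² - 7a²b + 3a³ + 2a. Assume b·R1 + 2b ≥ 0, R1 + 2 > 0 and (4b-3a)R1 + 8b - 6a ≠ 0, and define x* = √((b·R1 + 2b)/(4b - 3a)), y* = √(b(4b - 3a)/(R1 + 2)), z* = (a·R1 + R2)/((4b-3a)R1 + 8b - 6a). Then both points X1* = (-x*, y*, z*) and X2* = (x*, -y*, z*) are zeros of the Rabinovich–Fabrikant vector field f. -/

import Mathlib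

/-- For suitable parameters, the points `X₁* = (-x*, y*, z*)` and `X₂* = (x*, -y*, z*)`
are zeros of the Rabinovich–Fabrikant vector field. -/
theorem rf_equilibria_12 (a b R1 R2 xs ys zs : ℝ)
    (ha : 0 < a) (hb : 0 < b) (h4b3a : 0 < 4 * b - 3 * a)
    (hdisc : 0 ≤ 3 * a ^ 2 - 4 * a * b + 4)
    (hR1 : R1 = Real.sqrt (3 * a ^ 2 - 4 * a * b + 4))
    (hR2 : R2 = 4 * a * b ^ 2 - 7 * a ^ 2 * b + 3 * a ^ 3 + 2 * a)
    (hnum : 0 ≤ b * R1 + 2 * b) (hR1pos : 0 < R1 + 2)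
    (hden : (4 * b - 3 * a) * R1 + 8 * b - 6 * a ≠ 0)
    (hxs : xs = Real.sqrt ((b * R1 + 2 * b) / (4 * b - 3 * a)))
    (hys : ys = Real.sqrt (b * (4 * b - 3 * a) / (R1 + 2)))
    (hzs : zs = (a * R1 + R2) / ((4 * b - 3 * a) * R1 + 8 * b - 6 * a))
    (f : ℝ → ℝ → ℝ → ℝ × ℝ × ℝ)
    (hf : ∀ x1 x2 x3 : ℝ,
      f x1 x2 x3 = (x2 * (x3 - 1 + x1 ^ 2) + a * x1,
        x1 * (3 * x3 + 1 - x1 ^ 2) + a * x2,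
        -2 * x3 * (b + x1 * x2))) :
    f (-xs) ys zs = ((0 : ℝ), (0 : ℝ), (0 : ℝ)) ∧
      f xs (-ys) zs = ((0 : ℝ), (0 : ℝ), (0 : ℝ)) := by
  have hsq : R1 ^ 2 = 3 * a ^ 2 - 4 * a * b + 4 := by
    rw [hR1, Real.sq_sqrt hdisc]
  have h4ne : (4 * b - 3 * a) ≠ 0 := ne_of_gt h4b3a
  have hR1ne : R1 + 2 ≠ 0 := ne_of_gt hR1pos
  have hxsq : xs ^ 2 = (b * R1 + 2 * b) / (4 * b - 3 * a) := by
    rw [hxs, Real.sq_sqrt (div_nonneg hnum h4b3a.le)]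
  have hysq : ys ^ 2 = b * (4 * b - 3 * a) / (R1 + 2) := by
    rw [hys, Real.sq_sqrt (div_nonneg (mul_nonneg hb.le h4b3a.le) hR1pos.le)]
  have hxy : xs * ys = b := by
    rw [hxs, hys, ← Real.sqrt_mul (div_nonneg hnum h4b3a.le)]
    rw [show (b * R1 + 2 * b) / (4 * b - 3 * a) * (b * (4 * b - 3 * a) / (R1 + 2)) = b ^ 2 by
      rw [div_mul_div_comm, div_eq_iff (mul_ne_zero h4ne hR1ne)]; ring]
    exact Real.sqrt_sq hb.le
  have hxpos : 0 < xs := by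
    rw [hxs]
    apply Real.sqrt_pos.2
    apply div_pos _ h4b3a
    have h : b * R1 + 2 * b = b * (R1 + 2) := by ring
    rw [h]; exact mul_pos hb hR1pos
  have hypos : 0 < ys := by
    rw [hys]
    exact Real.sqrt_pos.2 (div_pos (mul_pos hb h4b3a) hR1pos)
  have hdenf : (4 * b - 3 * a) * (R1 + 2) ≠ 0 := mul_ne_zero h4ne hR1ne
  have hzs' : zs * ((4 * b - 3 * a) * (R1 + 2)) = a * R1 + R2 := by
    rw [hzs]
    have h : (4 * b - 3 * a) * R1 + 8 * b - 6 * a = (4 * b - 3 * a) * (R1 + 2) := by ring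
    rw [h, div_mul_cancel₀ _ hdenf]
  have hxsq' : xs ^ 2 * (4 * b - 3 * a) = b * (R1 + 2) := by
    rw [hxsq, div_mul_cancel₀ _ h4ne]; ring
  have key1 : b * (zs - 1 + xs ^ 2) = a * xs ^ 2 := by
    have hmain : b * (zs - 1 + xs ^ 2) * ((4 * b - 3 * a) * (R1 + 2))
        = a * xs ^ 2 * ((4 * b - 3 * a) * (R1 + 2)) := by
      linear_combination b * hzs' + (b - a) * (R1 + 2) * hxsq' + b * (b - a) * hsq + b * hR2
    exact mul_right_cancel₀ hdenf hmain
  have h3 : xs ^ 2 * zs * ((4 * b - 3 * a) ^ 2 * (R1 + 2)) = b * (R1 + 2) * (a * R1 + R2) := by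
    linear_combination zs * ((4 * b - 3 * a) * (R1 + 2)) * hxsq' + b * (R1 + 2) * hzs'
  have h4 : xs ^ 4 * ((4 * b - 3 * a) ^ 2 * (R1 + 2)) = b ^ 2 * (R1 + 2) ^ 3 := by
    linear_combination (xs ^ 2 * (4 * b - 3 * a) + b * (R1 + 2)) * (R1 + 2) * hxsq'
  have key2 : xs ^ 2 * (3 * zs + 1 - xs ^ 2) = a * b := by
    have hE : (4 * b - 3 * a) ^ 2 * (R1 + 2) ≠ 0 := mul_ne_zero (pow_ne_zero _ h4ne) hR1ne
    have hmain : xs ^ 2 * (3 * zs + 1 - xs ^ 2) * ((4 * b - 3 * a) ^ 2 * (R1 + 2))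
        = a * b * ((4 * b - 3 * a) ^ 2 * (R1 + 2)) := by
      linear_combination 3 * h3 + (4 * b - 3 * a) * (R1 + 2) * hxsq' - h4
        - b ^ 2 * (R1 + 2) * hsq + 3 * b * (R1 + 2) * hR2
    exact mul_right_cancel₀ hE hmain
  constructor
  · rw [hf]
    refine Prod.ext ?_ (Prod.ext ?_ ?_) <;> simp only
    · have h0 : xs * (ys * (zs - 1 + (-xs) ^ 2) + a * -xs) = 0 := by
        linear_combination (zs - 1 + xs ^ 2) * hxy + key1
      rcases mul_eq_zero.1 h0 with h | h
      · exact absurd h hxpos.ne'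
      · exact h
    · have h0 : xs * (-xs * (3 * zs + 1 - (-xs) ^ 2) + a * ys) = 0 := by
        linear_combination a * hxy - key2
      rcases mul_eq_zero.1 h0 with h | h
      · exact absurd h hxpos.ne'
      · exact h
    · linear_combination (2 * zs) * hxy
  · rw [hf]
    refine Prod.ext ?_ (Prod.ext ?_ ?_) <;> simp only
    · have h0 : xs * (-ys * (zs - 1 + xs ^ 2) + a * xs) = 0 := by
        linear_combination (-(zs - 1 + xs ^ 2)) * hxy - key1
      rcases mul_eq_zero.1 h0 with h | h
      · exact absurd h hxpos.ne'
      · exact h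
    · have h0 : xs * (xs * (3 * zs + 1 - xs ^ 2) + a * -ys) = 0 := by
        linear_combination key2 - a * hxy
      rcases mul_eq_zero.1 h0 with h | h
      · exact absurd h hxpos.ne'
      · exact h
    · linear_combination (2 * zs) * hxy
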